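/- Let T₀ > 0, let 0 < μ₁ < μ₂, let ω be a modulus of continuity, and let c : [0,T₀] → ℝ be continuous with μ₁ ≤ c(t) ≤ μ₂ and |c(t) − c(s)| ≤ ω(|t−s|) for all t,s ∈ [0,T₀]. Extend c by setting ĉ(t) := c(t) for t ∈ [0,T₀] and ĉ(t) := c(T₀) for t ≥ T₀, and for ε > 0 define c_ε(t) := (1/ε)·∫_t^{t+ε} ĉ(s) ds for t ≥ 0. Then c_ε is continuously differentiable on [0,T₀] and satisfies, for every t ∈ [0,T₀]: μ₁ ≤ c_ε(t) ≤ μ₂, |c_ε(t) − c(t)| ≤ ω(ε), and |c_ε'(t)| ≤ ω(ε)/ε. -/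

import Mathlib

open Set Filter MeasureTheory

/-- A modulus of continuity: positive for positive arguments, tends to `0` at `0⁺`,
nondecreasing, and `σ ↦ σ / ω σ` is nondecreasing on `(0, ∞)`. -/
def IsModulusOfContinuity (ω : ℝ → ℝ) : Prop :=
  (∀ σ : ℝ, 0 < σ → 0 < ω σ) ∧
  Tendsto ω (nhdsWithin 0 (Ioi 0)) (nhds 0) ∧
  (∀ s t : ℝ, 0 ≤ s → s ≤ t → ω s ≤ ω t) ∧
  (∀ s t : ℝ, 0 < s → s ≤ t → s / ω s ≤ t / ω t)

/-- The extension `ĉ` of `c`: equal to `c` on `(-∞, T₀]` and to `c(T₀)` afterwards. -/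
noncomputable def hatExt (T0 : ℝ) (c : ℝ → ℝ) : ℝ → ℝ :=
  fun t => if t ≤ T0 then c t else c T0

/-- The mollification `c_ε(t) = (1/ε) ∫_t^{t+ε} ĉ(s) ds`. -/
noncomputable def mollify (T0 ε : ℝ) (c : ℝ → ℝ) : ℝ → ℝ :=
  fun t => 1 / ε * ∫ s in t..(t + ε), hatExt T0 c s

theorem mollify_estimates
    (T0 μ1 μ2 : ℝ) (ω : ℝ → ℝ)
    (hT0 : 0 < T0) (hμ1 : 0 < μ1) (hμ12 : μ1 < μ2)
    (hω : IsModulusOfContinuity ω)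
    (c : ℝ → ℝ) (hccont : ContinuousOn c (Icc 0 T0))
    (hcbound : ∀ t ∈ Icc 0 T0, μ1 ≤ c t ∧ c t ≤ μ2)
    (hcomega : ∀ t ∈ Icc 0 T0, ∀ s ∈ Icc 0 T0, |c t - c s| ≤ ω |t - s|)
    (ε : ℝ) (hε : 0 < ε) :
    ∃ d : ℝ → ℝ,
      ContinuousOn d (Icc 0 T0) ∧
      (∀ t ∈ Icc 0 T0, HasDerivWithinAt (mollify T0 ε c) (d t) (Icc 0 T0) t) ∧
      ∀ t ∈ Icc 0 T0,
        μ1 ≤ mollify T0 ε c t ∧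
        mollify T0 ε c t ≤ μ2 ∧
        |mollify T0 ε c t - c t| ≤ ω ε ∧
        |d t| ≤ ω ε / ε := by
  obtain ⟨hωpos, hωlim, hωmono, -⟩ := hω
  set g : ℝ → ℝ := fun s => c (min (max s 0) T0) with hgdef
  have hclamp : ∀ s : ℝ, min (max s 0) T0 ∈ Icc 0 T0 := fun s =>
    ⟨le_min (le_max_right _ _) hT0.le, min_le_right _ _⟩
  have hgcont : Continuous g :=
    hccont.comp_continuous (by continuity) hclamp
  have hgeq : ∀ s : ℝ, 0 ≤ s → hatExt T0 c s = g s := by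
    intro s hs
    simp only [hatExt, hgdef]
    split_ifs with h
    · rw [max_eq_left hs, min_eq_left h]
    · rw [max_eq_left hs, min_eq_right (le_of_not_ge h)]
  have hmeq : ∀ t ∈ Icc (0:ℝ) T0,
      mollify T0 ε c t = 1 / ε * ∫ s in t..(t + ε), g s := by
    intro t ht
    unfold mollify
    congr 1
    apply intervalIntegral.integral_congr
    intro s hs
    rw [uIcc_of_le (by linarith)] at hs
    exact hgeq s (le_trans ht.1 hs.1)
  -- bounds on g
  have hgb : ∀ s : ℝ, μ1 ≤ g s ∧ g s ≤ μ2 := fun s => hcbound _ (hclamp s)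
  have hgω : ∀ t ∈ Icc (0:ℝ) T0, ∀ s ∈ Icc t (t + ε), |g s - c t| ≤ ω ε := by
    intro t ht s hs
    have h1 : t ≤ min (max s 0) T0 :=
      le_min (le_trans hs.1 (le_max_left _ _)) ht.2
    have h2 : min (max s 0) T0 ≤ s := by
      rw [max_eq_left (le_trans ht.1 hs.1)]; exact min_le_left _ _
    have := hcomega _ (hclamp s) t ht
    refine this.trans (hωmono _ _ (abs_nonneg _) ?_)
    rw [abs_of_nonneg (by linarith)]
    linarith [hs.2]
  refine ⟨fun t => 1 / ε * (g (t + ε) - g t), ?_, ?_, ?_⟩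
  · exact (continuous_const.mul ((hgcont.comp (by continuity)).sub hgcont)).continuousOn
  · intro t ht
    -- derivative
    set F : ℝ → ℝ := fun u => ∫ x in (0:ℝ)..u, g x with hFdef
    have hF : ∀ x : ℝ, HasDerivAt F (g x) x := fun x =>
      (hgcont.integral_hasStrictDerivAt 0 x).hasDerivAt
    have hm : ∀ u : ℝ, (1 : ℝ) / ε * ∫ s in u..(u + ε), g s = 1 / ε * (F (u + ε) - F u) := by
      intro u
      congr 1
      rw [hFdef]
      rw [← intervalIntegral.integral_interval_sub_left
        (hgcont.intervalIntegrable _ _) (hgcont.intervalIntegrable _ _)]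
    have hd : HasDerivAt (fun u => 1 / ε * (F (u + ε) - F u))
        (1 / ε * (g (t + ε) - g t)) t := by
      have h1 : HasDerivAt (fun u : ℝ => F (u + ε)) (g (t + ε)) t := by
        have := (hF (t + ε)).comp t ((hasDerivAt_id t).add_const ε)
        simpa [Function.comp_def] using this
      exact ((h1.sub (hF t)).const_mul _)
    have : HasDerivWithinAt (fun u => 1 / ε * ∫ s in u..(u + ε), g s)
        (1 / ε * (g (t + ε) - g t)) (Icc 0 T0) t := by
      simp only [hm]
      exact hd.hasDerivWithinAt
    exact this.congr (fun u hu => hmeq u hu) (hmeq t ht)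
  · intro t ht
    have hle : t ≤ t + ε := by linarith
    rw [hmeq t ht]
    have hint : IntervalIntegrable g volume t (t + ε) := hgcont.intervalIntegrable _ _
    constructor
    · have : (ε * μ1) ≤ ∫ s in t..(t + ε), g s := by
        have := intervalIntegral.integral_mono_on hle
          (intervalIntegrable_const) hint (fun s hs => (hgb s).1)
        simpa using this
      rw [one_div, inv_mul_eq_div, le_div_iff₀ hε]
      linarith
    refine ⟨?_, ?_, ?_⟩
    · have : (∫ s in t..(t + ε), g s) ≤ ε * μ2 := by
        have := intervalIntegral.integral_mono_on hle
          hint (intervalIntegrable_const) (fun s hs => (hgb s).2)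
        simpa using this
      rw [one_div, inv_mul_eq_div, div_le_iff₀ hε]
      linarith
    · have hsub : 1 / ε * (∫ s in t..(t + ε), g s) - c t
          = 1 / ε * ∫ s in t..(t + ε), (g s - c t) := by
        rw [intervalIntegral.integral_sub hint intervalIntegrable_const]
        simp
        field_simp
      rw [hsub, abs_mul, abs_of_nonneg (by positivity : (0:ℝ) ≤ 1/ε)]
      have h1 : |∫ s in t..(t + ε), (g s - c t)| ≤ ∫ s in t..(t + ε), |g s - c t| :=
        intervalIntegral.abs_integral_le_integral_abs hle
      have h2 : (∫ s in t..(t + ε), |g s - c t|) ≤ ε * ω ε := by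
        have := intervalIntegral.integral_mono_on hle
          (hint.sub intervalIntegrable_const).abs intervalIntegrable_const
          (fun s hs => hgω t ht s hs)
        simpa using this
      calc 1 / ε * |∫ s in t..(t + ε), (g s - c t)| ≤ 1 / ε * (ε * ω ε) := by
            apply mul_le_mul_of_nonneg_left (h1.trans h2) (by positivity)
        _ = ω ε := by field_simp
    · rw [abs_mul, abs_of_nonneg (by positivity : (0:ℝ) ≤ 1/ε)]
      have hgt : g t = c t := by
        rw [hgdef]
        simp only
        rw [max_eq_left ht.1, min_eq_left ht.2]
      rw [hgt]
      have h := hgω t ht (t + ε) ⟨hle, le_refl _⟩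
      calc 1 / ε * |g (t + ε) - c t| ≤ 1 / ε * ω ε :=
            mul_le_mul_of_nonneg_left h (by positivity)
        _ = ω ε / ε := by ring
  done
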